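/- Let θ ∈ (π, 2π) be a real number and m ≥ 1 an integer. Suppose δ := min({mθ/π}, 1 − {mθ/π}) satisfies δ < min(θ/π − 1, 1 − θ/(2π)), where {x} denotes the fractional part of x. Then ⌈(2m−2)θ/(2π)⌉ < ⌈(2m−1)θ/(2π)⌉. -/

import Mathlib

open Real

/-- The ceiling gap (5.42)-(5.43) in Lemma 5.2. -/
theorem ceil_gap (θ : ℝ) (hθ : θ ∈ Set.Ioo π (2 * π)) (m : ℕ) (hm : 1 ≤ m)
    (hδ : min (Int.fract ((m : ℝ) * θ / π)) (1 - Int.fract ((m : ℝ) * θ / π))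
      < min (θ / π - 1) (1 - θ / (2 * π))) :
    ⌈(2 * (m : ℝ) - 2) * θ / (2 * π)⌉ < ⌈(2 * (m : ℝ) - 1) * θ / (2 * π)⌉ := by
  have hπ : (0:ℝ) < π := Real.pi_pos
  obtain ⟨h1, h2⟩ := hθ
  set x := (m : ℝ) * θ / π with hx
  have hA : (2 * (m : ℝ) - 2) * θ / (2 * π) = x - θ / π := by
    rw [hx]; field_simp
  have hB : (2 * (m : ℝ) - 1) * θ / (2 * π) = x - θ / (2 * π) := by
    rw [hx]; field_simp
  rw [hA, hB]
  set f := Int.fract x with hf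
  set k := ⌊x⌋ with hk
  have hf0 : 0 ≤ f := Int.fract_nonneg x
  have hf1 : f < 1 := Int.fract_lt_one x
  have hfl : (k : ℝ) + f = x := Int.floor_add_fract x
  have hθπ : 1 < θ / π := (one_lt_div hπ).mpr h1
  have hθ2π : θ / (2 * π) < 1 := (div_lt_one (by linarith)).mpr h2
  have hθ2π0 : 0 < θ / (2 * π) := div_pos (by linarith) (by linarith)
  rcases le_or_gt f (1 - f) with h | h
  · have hmin : f < min (θ / π - 1) (1 - θ / (2 * π)) := by
      rwa [min_eq_left h] at hδ
    have hfa := lt_of_lt_of_le hmin (min_le_left _ _)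
    calc ⌈x - θ / π⌉ ≤ k - 1 := Int.ceil_le.mpr (by push_cast; linarith)
      _ < ⌈x - θ / (2 * π)⌉ := Int.lt_ceil.mpr (by push_cast; linarith)
  · have hmin : 1 - f < min (θ / π - 1) (1 - θ / (2 * π)) := by
      rwa [min_eq_right h.le] at hδ
    have hfb := lt_of_lt_of_le hmin (min_le_right _ _)
    calc ⌈x - θ / π⌉ ≤ k := Int.ceil_le.mpr (by push_cast; linarith)
      _ < ⌈x - θ / (2 * π)⌉ := Int.lt_ceil.mpr (by push_cast; linarith)
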